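/- Let Γ be a collection of subsets of Baire space (ℕ → ℕ) containing the clopen sets and closed under continuous preimages, countable unions, countable intersections, and projections (images under the projection (ℕ→ℕ)×(ℕ→ℕ) → (ℕ→ℕ)), and let Δ_Γ = Γ ∩ {complements of sets in Γ}. Then for any function f : (ℕ→ℕ) → (ℕ→ℕ), the following are equivalent: (i) the preimage under f of every set in Γ is in Γ; (ii) the preimage under f of every set in Δ_Γ is in Δ_Γ; (iii) the preimage under f of every set in Δ_Γ is in Γ (Δ_Γ-measurability); (iv) the graph of f, as a subset of the product space, belongs to Δ_Γ; (v) the graph of f belongs to Γ. -/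

import Mathlib

/-- Proposition 3.2: characterizations of Γ-functions for an existential pointclass Γ.
Baire space is `ℕ → ℕ`; the product is identified with Baire space via a homeomorphism `e`. -/
theorem stmt_0 (Γ : Set (Set (ℕ → ℕ)))
    (e : ((ℕ → ℕ) × (ℕ → ℕ)) ≃ₜ (ℕ → ℕ))
    (hclopen : ∀ A : Set (ℕ → ℕ), IsClopen A → A ∈ Γ)
    (hcont : ∀ g : (ℕ → ℕ) → (ℕ → ℕ), Continuous g → ∀ A ∈ Γ, g ⁻¹' A ∈ Γ)
    (hunion : ∀ A : ℕ → Set (ℕ → ℕ), (∀ n, A n ∈ Γ) → (⋃ n, A n) ∈ Γ)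
    (hinter : ∀ A : ℕ → Set (ℕ → ℕ), (∀ n, A n ∈ Γ) → (⋂ n, A n) ∈ Γ)
    (hproj : ∀ B : Set ((ℕ → ℕ) × (ℕ → ℕ)), e '' B ∈ Γ → {x | ∃ y, (x, y) ∈ B} ∈ Γ)
    (f : (ℕ → ℕ) → (ℕ → ℕ)) :
    List.TFAE
      [∀ A ∈ Γ, f ⁻¹' A ∈ Γ,
       ∀ A : Set (ℕ → ℕ), A ∈ Γ ∧ Aᶜ ∈ Γ → f ⁻¹' A ∈ Γ ∧ (f ⁻¹' A)ᶜ ∈ Γ,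
       ∀ A : Set (ℕ → ℕ), A ∈ Γ ∧ Aᶜ ∈ Γ → f ⁻¹' A ∈ Γ,
       e '' {p : (ℕ → ℕ) × (ℕ → ℕ) | f p.1 = p.2} ∈ Γ ∧
         (e '' {p : (ℕ → ℕ) × (ℕ → ℕ) | f p.1 = p.2})ᶜ ∈ Γ,
       e '' {p : (ℕ → ℕ) × (ℕ → ℕ) | f p.1 = p.2} ∈ Γ] := by
  -- binary intersections
  have hbin : ∀ A B : Set (ℕ → ℕ), A ∈ Γ → B ∈ Γ → A ∩ B ∈ Γ := by
    intro A B hA hB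
    have h := hinter (fun n => if n = 0 then A else B)
      (by intro n; by_cases hn : n = 0 <;> simp [hn, hA, hB])
    have heq : (⋂ n, if n = 0 then A else B) = A ∩ B := by
      ext x
      simp only [Set.mem_iInter, Set.mem_inter_iff]
      constructor
      · intro h; exact ⟨by simpa using h 0, by simpa using h 1⟩
      · rintro ⟨h1, h2⟩ n; by_cases hn : n = 0 <;> simp [hn, h1, h2]
    rwa [heq] at h
  -- clopen basic sets
  have hc1 : ∀ n k : ℕ, IsClopen {z : ℕ → ℕ | z n = k} := by
    intro n k
    have : IsClopen ((fun z : ℕ → ℕ => z n) ⁻¹' {k}) :=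
      (isClopen_discrete ({k} : Set ℕ)).preimage (continuous_apply n)
    simpa [Set.preimage, Set.mem_singleton_iff] using this
  have hg1 : Continuous (fun x : ℕ → ℕ => (e.symm x).1) :=
    continuous_fst.comp e.symm.continuous
  have hg2 : Continuous (fun x : ℕ → ℕ => (e.symm x).2) :=
    continuous_snd.comp e.symm.continuous
  have himg : ∀ B : Set ((ℕ → ℕ) × (ℕ → ℕ)), e '' B = e.symm ⁻¹' B := by
    intro B; exact e.image_eq_preimage_symm B
  tfae_have 1 → 2
  · intro h1 A ⟨hA, hAc⟩
    exact ⟨h1 A hA, by rw [← Set.preimage_compl]; exact h1 _ hAc⟩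
  tfae_have 2 → 3
  · intro h2 A hA; exact (h2 A hA).1
  tfae_have 3 → 4
  · intro h3
    have key : ∀ A : Set (ℕ → ℕ), A ∈ Γ ∧ Aᶜ ∈ Γ →
        {x : ℕ → ℕ | f (e.symm x).1 ∈ A} ∈ Γ := by
      intro A hA
      have := hcont _ hg1 _ (h3 A hA)
      simpa [Set.preimage] using this
    constructor
    · have heq : e '' {p : (ℕ → ℕ) × (ℕ → ℕ) | f p.1 = p.2} =
          ⋂ n, ⋃ k, ({x | (e.symm x).2 n = k} ∩ {x | f (e.symm x).1 n = k}) := by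
        rw [himg]
        ext x
        simp only [Set.mem_preimage, Set.mem_setOf_eq, Set.mem_iInter, Set.mem_iUnion,
          Set.mem_inter_iff]
        constructor
        · intro h n; exact ⟨(e.symm x).2 n, rfl, by rw [h]⟩
        · intro h; funext n; obtain ⟨k, hk1, hk2⟩ := h n; rw [hk2, hk1]
      rw [heq]
      apply hinter; intro n
      apply hunion; intro k
      apply hbin
      · exact hclopen _ ((isClopen_discrete ({k} : Set ℕ)).preimage
          ((continuous_apply n).comp hg2))
      · have : {x : ℕ → ℕ | f (e.symm x).1 n = k} =
            {x : ℕ → ℕ | f (e.symm x).1 ∈ {z : ℕ → ℕ | z n = k}} := rfl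
        rw [this]
        apply key
        refine ⟨hclopen _ (hc1 n k), hclopen _ (hc1 n k).compl⟩
    · have heq : (e '' {p : (ℕ → ℕ) × (ℕ → ℕ) | f p.1 = p.2})ᶜ =
          ⋃ n, ⋃ k, ({x | (e.symm x).2 n = k} ∩ {x | f (e.symm x).1 n ≠ k}) := by
        rw [himg]
        ext x
        simp only [Set.mem_compl_iff, Set.mem_preimage, Set.mem_setOf_eq, Set.mem_iUnion,
          Set.mem_inter_iff]
        constructor
        · intro h
          by_contra hcon
          push_neg at hcon
          apply h
          funext n
          have := hcon n ((e.symm x).2 n) rfl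
          omega
        · rintro ⟨n, k, hk1, hk2⟩ h
          apply hk2
          rw [h, hk1]
      rw [heq]
      apply hunion; intro n
      apply hunion; intro k
      apply hbin
      · exact hclopen _ ((isClopen_discrete ({k} : Set ℕ)).preimage
          ((continuous_apply n).comp hg2))
      · have : {x : ℕ → ℕ | f (e.symm x).1 n ≠ k} =
            {x : ℕ → ℕ | f (e.symm x).1 ∈ {z : ℕ → ℕ | z n ≠ k}} := rfl
        rw [this]
        apply key
        constructor
        · exact hclopen _ (hc1 n k).compl
        · have : ({z : ℕ → ℕ | z n ≠ k})ᶜ = {z : ℕ → ℕ | z n = k} := by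
            ext z; simp
          rw [this]; exact hclopen _ (hc1 n k)
  tfae_have 4 → 5
  · intro h4; exact h4.1
  tfae_have 5 → 1
  · intro h5 A hA
    have hA2 : e '' {p : (ℕ → ℕ) × (ℕ → ℕ) | p.2 ∈ A} ∈ Γ := by
      rw [himg]
      exact hcont _ hg2 _ hA
    have hB : e '' ({p : (ℕ → ℕ) × (ℕ → ℕ) | f p.1 = p.2} ∩ {p | p.2 ∈ A}) ∈ Γ := by
      rw [Set.image_inter e.injective]
      exact hbin _ _ h5 hA2
    have := hproj _ hB
    have heq : {x | ∃ y, (x, y) ∈ {p : (ℕ → ℕ) × (ℕ → ℕ) | f p.1 = p.2} ∩ {p | p.2 ∈ A}}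
        = f ⁻¹' A := by
      ext x
      simp only [Set.mem_setOf_eq, Set.mem_inter_iff, Set.mem_preimage]
      constructor
      · rintro ⟨y, h1, h2⟩; rwa [h1]
      · intro h; exact ⟨f x, rfl, h⟩
    rwa [heq] at this
  tfae_finish
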